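/- The scalar geometric Bonferroni mean dominates the geometric mean: for positive reals a_1,…,a_n and r, s ≥ 0 with r + s > 0, GBM^{r,s}(a_1,…,a_n) ≥ (∏_{i=1}^n a_i)^{1/n}, with equality when all a_i are equal. -/

import Mathlib

open Finset

lemma prod_fst_offdiag {n : ℕ} (g : Fin n → ℝ) :
    ∏ p ∈ Finset.univ.filter (fun p : Fin n × Fin n => p.1 ≠ p.2), g p.1
      = (∏ i, g i) ^ (n - 1) := by
  rw [Finset.prod_filter, Fintype.prod_prod_type, ← Finset.prod_pow]
  refine Finset.prod_congr rfl fun i _ => ?_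
  rw [← Finset.prod_filter, Finset.filter_ne]
  simp [Finset.card_erase_of_mem, Finset.card_univ]

lemma prod_snd_offdiag {n : ℕ} (g : Fin n → ℝ) :
    ∏ p ∈ Finset.univ.filter (fun p : Fin n × Fin n => p.1 ≠ p.2), g p.2
      = (∏ i, g i) ^ (n - 1) := by
  rw [Finset.prod_filter, Fintype.prod_prod_type, Finset.prod_comm, ← Finset.prod_pow]
  refine Finset.prod_congr rfl fun j _ => ?_
  rw [← Finset.prod_filter]
  have h : Finset.filter (fun i : Fin n => i ≠ j) Finset.univ = Finset.univ.erase j := by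
    ext x; simp [Finset.mem_erase, and_comm]
  rw [h]
  simp [Finset.card_erase_of_mem, Finset.card_univ]

lemma card_offdiag {n : ℕ} :
    (Finset.univ.filter (fun p : Fin n × Fin n => p.1 ≠ p.2)).card = n * n - n := by
  have : Finset.univ.filter (fun p : Fin n × Fin n => p.1 ≠ p.2) = Finset.univ.offDiag := by
    ext p; simp
  rw [this, Finset.offDiag_card, Finset.card_univ, Fintype.card_fin]

noncomputable def GBM (n : ℕ) (r s : ℝ) (a : Fin n → ℝ) : ℝ :=
  (1 / (r + s)) *
    ∏ p ∈ Finset.univ.filter (fun p : Fin n × Fin n => p.1 ≠ p.2),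
      (r * a p.1 + s * a p.2) ^ (((n : ℝ) * ((n : ℝ) - 1))⁻¹)

theorem GBM_ge_geometric_mean
    (n : ℕ) (hn : 2 ≤ n) (r s : ℝ) (hr : 0 ≤ r) (hs : 0 ≤ s) (hrs : 0 < r + s)
    (a : Fin n → ℝ) (ha : ∀ i, 0 < a i) :
    (∏ i : Fin n, a i) ^ ((n : ℝ)⁻¹) ≤ GBM n r s a ∧
    ((∀ i j, a i = a j) → GBM n r s a = (∏ i : Fin n, a i) ^ ((n : ℝ)⁻¹)) := by
  set S := Finset.univ.filter (fun p : Fin n × Fin n => p.1 ≠ p.2) with hS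
  set e : ℝ := ((n : ℝ) * ((n : ℝ) - 1))⁻¹ with he
  have hn2 : (2 : ℝ) ≤ (n : ℝ) := by exact_mod_cast hn
  have hN : 0 < (n : ℝ) * ((n : ℝ) - 1) := by nlinarith
  have he0 : 0 ≤ e := le_of_lt (inv_pos.mpr hN)
  have hcard : (S.card : ℝ) = (n : ℝ) * ((n : ℝ) - 1) := by
    rw [hS, card_offdiag]
    have h1 : n ≤ n * n := Nat.le_mul_of_pos_left n (by omega)
    push_cast [Nat.cast_sub h1]
    ring
  have hn1 : ((n - 1 : ℕ) : ℝ) = (n : ℝ) - 1 := by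
    rw [Nat.cast_sub (by omega : 1 ≤ n)]; norm_num
  have hA : 0 < ∏ i : Fin n, a i := Finset.prod_pos fun i _ => ha i
  set A := ∏ i : Fin n, a i with hAdef
  set w₁ : ℝ := r / (r + s) with hw1
  set w₂ : ℝ := s / (r + s) with hw2
  have hw1n : 0 ≤ w₁ := div_nonneg hr hrs.le
  have hw2n : 0 ≤ w₂ := div_nonneg hs hrs.le
  have hwsum : w₁ + w₂ = 1 := by rw [hw1, hw2]; field_simp
  have hrpnn : ∀ p : Fin n × Fin n, 0 ≤ a p.1 ^ w₁ * a p.2 ^ w₂ := fun p =>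
    mul_nonneg (Real.rpow_nonneg (ha _).le _) (Real.rpow_nonneg (ha _).le _)
  constructor
  · -- inequality
    have key : ∀ p ∈ S, ((r + s) * (a p.1 ^ w₁ * a p.2 ^ w₂)) ^ e
        ≤ (r * a p.1 + s * a p.2) ^ e := by
      intro p _
      apply Real.rpow_le_rpow
      · exact mul_nonneg hrs.le (hrpnn p)
      · have := Real.geom_mean_le_arith_mean2_weighted hw1n hw2n (ha p.1).le (ha p.2).le hwsum
        calc (r + s) * (a p.1 ^ w₁ * a p.2 ^ w₂) ≤ (r + s) * (w₁ * a p.1 + w₂ * a p.2) :=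
              mul_le_mul_of_nonneg_left this hrs.le
          _ = r * a p.1 + s * a p.2 := by rw [hw1, hw2]; field_simp
      · exact he0
    have h1 : ∏ p ∈ S, ((r + s) * (a p.1 ^ w₁ * a p.2 ^ w₂)) ^ e
        ≤ ∏ p ∈ S, (r * a p.1 + s * a p.2) ^ e := by
      apply Finset.prod_le_prod
      · intro p _; exact Real.rpow_nonneg (mul_nonneg hrs.le (hrpnn p)) _
      · exact key
    have h2 : ∏ p ∈ S, ((r + s) * (a p.1 ^ w₁ * a p.2 ^ w₂)) ^ e
        = (r + s) * A ^ (n : ℝ)⁻¹ := by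
      rw [Real.finset_prod_rpow _ _ (fun p _ => mul_nonneg hrs.le (hrpnn p))]
      have hprod : ∏ p ∈ S, ((r + s) * (a p.1 ^ w₁ * a p.2 ^ w₂))
          = (r + s) ^ S.card * ((A ^ w₁) ^ (n - 1) * (A ^ w₂) ^ (n - 1)) := by
        rw [Finset.prod_mul_distrib, Finset.prod_const, Finset.prod_mul_distrib]
        rw [hS, prod_fst_offdiag (fun i => a i ^ w₁), prod_snd_offdiag (fun i => a i ^ w₂)]
        rw [Real.finset_prod_rpow _ _ (fun i _ => (ha i).le),
          Real.finset_prod_rpow _ _ (fun i _ => (ha i).le)]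
      rw [hprod]
      rw [Real.mul_rpow (by positivity) (by positivity)]
      rw [← Real.rpow_natCast (r+s) S.card, ← Real.rpow_mul hrs.le, hcard]
      rw [Real.mul_rpow (by positivity) (by positivity)]
      rw [← Real.rpow_natCast (A ^ w₁) (n-1), ← Real.rpow_natCast (A ^ w₂) (n-1),
        ← Real.rpow_mul hA.le, ← Real.rpow_mul hA.le, ← Real.rpow_mul hA.le,
        ← Real.rpow_mul hA.le, ← Real.rpow_add hA, hn1]
      have e1 : ((n : ℝ) * ((n : ℝ) - 1)) * e = 1 := by
        rw [he]; exact mul_inv_cancel₀ hN.ne'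
      have e2 : w₁ * ((n:ℝ) - 1) * e + w₂ * ((n:ℝ) - 1) * e = (n:ℝ)⁻¹ := by
        have : w₁ * ((n:ℝ) - 1) * e + w₂ * ((n:ℝ) - 1) * e = (w₁ + w₂) * (((n:ℝ) - 1) * e) := by ring
        rw [this, hwsum, one_mul, he]
        rw [mul_inv, ← mul_assoc]
        rw [mul_comm ((n:ℝ)-1), mul_assoc, mul_inv_cancel₀ (show (n:ℝ) - 1 ≠ 0 by linarith), mul_one]
      rw [e1, e2, Real.rpow_one]
    rw [GBM]
    calc A ^ (n:ℝ)⁻¹ = (1/(r+s)) * ((r+s) * A ^ (n:ℝ)⁻¹) := by field_simp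
      _ ≤ (1/(r+s)) * ∏ p ∈ S, (r * a p.1 + s * a p.2) ^ e := by
          apply mul_le_mul_of_nonneg_left _ (by positivity)
          rw [← h2]; exact h1
  · -- equality
    intro h
    have i0 : Fin n := ⟨0, by omega⟩
    have hc : ∀ i, a i = a i0 := fun i => h i i0
    have hcpos : 0 < a i0 := ha i0
    have hfac : ∀ p ∈ S, (r * a p.1 + s * a p.2) ^ e = ((r + s) * a i0) ^ e := by
      intro p _; rw [hc p.1, hc p.2]; ring_nf
    rw [GBM, Finset.prod_congr rfl hfac, Finset.prod_const]
    rw [← Real.rpow_natCast (((r+s) * a i0) ^ e) S.card, ← Real.rpow_mul (by positivity), hcard]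
    have e1 : e * ((n : ℝ) * ((n : ℝ) - 1)) = 1 := by rw [he]; exact inv_mul_cancel₀ hN.ne'
    rw [e1, Real.rpow_one]
    have hprodA : A = a i0 ^ (n:ℕ) := by
      rw [hAdef]
      rw [Finset.prod_congr rfl (fun i _ => hc i), Finset.prod_const]
      simp
    rw [hprodA, ← Real.rpow_natCast (a i0) n, ← Real.rpow_mul hcpos.le,
      mul_inv_cancel₀ (by positivity : (0:ℝ) < n).ne', Real.rpow_one]
    field_simp
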